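/- Let H ≅ C_2³ or Q_8 be a group of order 8 acting on a 27-element set V with 6 orbits, with orbit lengths 8,8,4,4,2,1, such that every element of order 2 fixes exactly 3 points of V. Then a contradiction follows; hence any such group acting with 6 orbits and all involutions having exactly 3 fixed points must have orbit lengths 8,8,8,1,1,1. -/

import Mathlib

/-- In a group where every square is 1, or a group isomorphic to `Q₈`, every element
with `g ^ 2 = 1` is central. -/
lemma sq_one_central {H : Type*} [Group H]
    (hiso : (∀ g : H, g ^ 2 = 1) ∨ Nonempty (H ≃* QuaternionGroup 2))
    (g : H) (hg : g ^ 2 = 1) : ∀ h : H, g * h = h * g := by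
  rcases hiso with h2 | he
  · intro h
    have hinv : ∀ x : H, x⁻¹ = x := fun x => by
      have := h2 x
      rw [pow_two] at this
      exact inv_eq_of_mul_eq_one_left this
    have : (g * h)⁻¹ = g * h := hinv _
    rw [mul_inv_rev, hinv g, hinv h] at this
    exact this.symm ▸ rfl
  · obtain ⟨e⟩ := he
    intro h
    have key : ∀ x : QuaternionGroup 2, x ^ 2 = 1 → ∀ y, x * y = y * x := by decide
    have hge : (e g) ^ 2 = 1 := by rw [← map_pow, hg, map_one]
    have := key (e g) hge (e h)
    have : e (g * h) = e (h * g) := by simpa [map_mul] using this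
    exact e.injective this

theorem order_eight_orbit_lengths {H : Type*} [Group H] [Fintype H]
    (hc : Fintype.card H = 8)
    (hiso : (∀ g : H, g ^ 2 = 1) ∨ Nonempty (H ≃* QuaternionGroup 2))
    {V : Type*} [Fintype V] [MulAction H V] (hV : Fintype.card V = 27)
    (horb : Nat.card (MulAction.orbitRel.Quotient H V) = 6)
    (hinv : ∀ g : H, orderOf g = 2 → {v : V | g • v = v}.ncard = 3) :
    {s : Set V | (∃ v : V, s = MulAction.orbit H v) ∧ s.ncard = 8}.ncard = 3 ∧
    {s : Set V | (∃ v : V, s = MulAction.orbit H v) ∧ s.ncard = 1}.ncard = 3 := by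
  classical
  -- basic facts about orbit sizes
  have horbdvd : ∀ v : V, (MulAction.orbit H v).ncard ∣ 8 := by
    intro v
    haveI : Fintype (MulAction.orbit H v) := Fintype.ofFinite _
    have := MulAction.card_orbit_mul_card_stabilizer_eq_card_group H v
    rw [hc] at this
    have hcard : (MulAction.orbit H v).ncard = Fintype.card (MulAction.orbit H v) := by
      rw [← Nat.card_coe_set_eq, Nat.card_eq_fintype_card]
    rw [hcard]
    exact ⟨_, this.symm⟩
  have horbpos : ∀ v : V, 0 < (MulAction.orbit H v).ncard := by
    intro v
    have : v ∈ MulAction.orbit H v := MulAction.mem_orbit_self v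
    exact (Set.ncard_pos (Set.toFinite _)).2 ⟨v, this⟩
  -- no orbit of size 4
  have hno4 : ∀ v : V, (MulAction.orbit H v).ncard ≠ 4 := by
    intro v h4
    haveI : Fintype (MulAction.orbit H v) := Fintype.ofFinite _
    have hcard : Fintype.card (MulAction.orbit H v) = 4 := by
      rw [← Nat.card_eq_fintype_card, Nat.card_coe_set_eq, h4]
    have hstab : Fintype.card (MulAction.stabilizer H v) = 2 := by
      have := MulAction.card_orbit_mul_card_stabilizer_eq_card_group H v
      rw [hc, hcard] at this
      omega
    -- get an element of order 2 in the stabilizer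
    haveI : Nontrivial (MulAction.stabilizer H v) :=
      Fintype.one_lt_card_iff_nontrivial.1 (by rw [hstab]; norm_num)
    obtain ⟨g, hg1⟩ := exists_ne (1 : MulAction.stabilizer H v)
    have hgsq : g ^ 2 = 1 := by
      rw [← hstab]; exact pow_card_eq_one
    have hgsq' : (g : H) ^ 2 = 1 := by
      rw [← Subgroup.coe_pow, hgsq, Subgroup.coe_one]
    have hgne : (g : H) ≠ 1 := fun h => hg1 (Subtype.ext h)
    haveI : Fact (Nat.Prime 2) := ⟨Nat.prime_two⟩
    have hord : orderOf (g : H) = 2 := orderOf_eq_prime hgsq' hgne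
    -- g is central, hence fixes the whole orbit
    have hcent := sq_one_central hiso (g : H) hgsq'
    have hsub : MulAction.orbit H v ⊆ {w : V | (g : H) • w = w} := by
      rintro w ⟨h, rfl⟩
      show (g : H) • h • v = h • v
      rw [smul_smul, hcent h, ← smul_smul, g.2]
    have hle := Set.ncard_le_ncard hsub (Set.toFinite _)
    rw [h4, hinv (g : H) hord] at hle
    omega
  -- set up counting over the orbit quotient
  set Q := MulAction.orbitRel.Quotient H V with hQ
  haveI : Finite Q := Quotient.finite _
  haveI : Fintype Q := Fintype.ofFinite _
  have hQcard : Fintype.card Q = 6 := by rw [← Nat.card_eq_fintype_card, horb]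
  set n : Q → ℕ := fun q => q.orbit.ncard with hn
  have horbq : ∀ q : Q, ∃ v : V, q.orbit = MulAction.orbit H v := by
    intro q
    exact ⟨Quotient.out q, q.orbit_eq_orbit_out Quotient.out_eq'⟩
  have hmem : ∀ q : Q, n q = 1 ∨ n q = 2 ∨ n q = 8 := by
    intro q
    obtain ⟨v, hv⟩ := horbq q
    have h1 : n q ∣ 8 := by rw [hn]; simp only; rw [hv]; exact horbdvd v
    have h2 : n q ≠ 4 := by rw [hn]; simp only; rw [hv]; exact hno4 v
    have h3 : 0 < n q := by rw [hn]; simp only; rw [hv]; exact horbpos v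
    have h4 : n q ≤ 8 := Nat.le_of_dvd (by norm_num) h1
    generalize hmq : n q = m at h1 h2 h3 h4 ⊢
    interval_cases m <;> omega
  -- class equation
  have hsum : ∑ q : Q, n q = 27 := by
    have e := MulAction.selfEquivSigmaOrbits' H V
    have := Fintype.card_congr e
    rw [hV, Fintype.card_sigma] at this
    rw [this]
    apply Finset.sum_congr rfl
    intro q _
    rw [hn]
    simp only
    rw [← Nat.card_coe_set_eq, Nat.card_eq_fintype_card]
  -- count fibers
  set A := Finset.univ.filter (fun q : Q => n q = 1) with hA
  set B := Finset.univ.filter (fun q : Q => n q = 2) with hB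
  set C := Finset.univ.filter (fun q : Q => n q = 8) with hC
  have hdAB : Disjoint A B := by
    rw [Finset.disjoint_filter]; intro q _ h1 h2; omega
  have hdABC : Disjoint (A ∪ B) C := by
    rw [Finset.disjoint_union_left]
    constructor <;> rw [Finset.disjoint_filter] <;> intro q _ h1 h2 <;> omega
  have hcover : A ∪ B ∪ C = Finset.univ := by
    ext q
    simp only [Finset.mem_union, hA, hB, hC, Finset.mem_filter, Finset.mem_univ, true_and,
      iff_true]
    have := hmem q; tauto
  have hcards : A.card + B.card + C.card = 6 := by
    rw [← Finset.card_union_of_disjoint hdAB, ← Finset.card_union_of_disjoint hdABC, hcover,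
      Finset.card_univ, hQcard]
  have hsums : A.card * 1 + B.card * 2 + C.card * 8 = 27 := by
    have e1 : ∑ q ∈ A, n q = A.card * 1 :=
      Finset.sum_const_nat (fun q hq => by rw [hA, Finset.mem_filter] at hq; exact hq.2)
    have e2 : ∑ q ∈ B, n q = B.card * 2 :=
      Finset.sum_const_nat (fun q hq => by rw [hB, Finset.mem_filter] at hq; exact hq.2)
    have e3 : ∑ q ∈ C, n q = C.card * 8 :=
      Finset.sum_const_nat (fun q hq => by rw [hC, Finset.mem_filter] at hq; exact hq.2)
    rw [← e1, ← e2, ← e3, ← Finset.sum_union hdAB, ← Finset.sum_union hdABC, hcover, hsum]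
  have hCc : C.card = 3 ∧ A.card = 3 := by omega
  -- translate counts on the quotient into counts of orbit sets
  have key : ∀ m : ℕ,
      {s : Set V | (∃ v : V, s = MulAction.orbit H v) ∧ s.ncard = m}.ncard =
        (Finset.univ.filter (fun q : Q => n q = m)).card := by
    intro m
    have himg : {s : Set V | (∃ v : V, s = MulAction.orbit H v) ∧ s.ncard = m} =
        (fun q : Q => q.orbit) '' {q : Q | n q = m} := by
      ext s
      constructor
      · rintro ⟨⟨v, rfl⟩, hm⟩
        exact ⟨Quotient.mk'' v, by simpa [hn] using hm, by simp⟩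
      · rintro ⟨q, hq, rfl⟩
        obtain ⟨v, hv⟩ := horbq q
        exact ⟨⟨v, hv⟩, hq⟩
    rw [himg, Set.ncard_image_of_injective _ MulAction.orbitRel.Quotient.orbit_injective,
      Set.ncard_eq_toFinset_card']
    congr 1
    ext q
    simp [hn]
    exact Iff.rfl
  rw [key 8, key 1]
  exact ⟨hCc.1, hCc.2⟩
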